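/- Consider panel data Y ∈ ℝ^{N×T} with Y_{i,t} = X_{i,t}ᵀβ* + ε_{i,t}, fixed covariates X_{i,t} ∈ ℝ^D, fixed β* ∈ ℝ^D, and a random error matrix ε ∈ ℝ^{N×T}. Let C₁,…,C_M partition {1,…,N} and let P ∈ ℝ^{T×T} satisfy Pᵀ = P and P² = I_T. Suppose: (i) marginal invariance, i.e., ε_{C_m} and ε_{C_m}P are equal in distribution for each m; and (ii) the null hypothesis that ε_{C_1},…,ε_{C_M} are jointly independent. Let ε̂ ∈ ℝ^{N×T} be the mosaic residual matrix: for each cluster m, ε̂_{C_m} is the OLS residual of the vectorized outcomes {Y_{i,t} : i ∈ C_m, t ∈ [T]} regressed on the 2D augmented covariates consisting of X_{i,t} together with the transformed covariates X^{trans}_{i,t}, where the d-th transformed covariate matrix is X^{(d)}P (X^{(d)} ∈ ℝ^{N×T} being the matrix of values of the d-th covariate), assuming each cluster's augmented design has full column rank. Independently of ε, draw R i.i.d. uniform random vectors B^{(1)},…,B^{(R)} ∈ {0,1}^M and define randomized residuals ε̃^{(r)} by ε̃^{(r)}_{C_m} = ε̂_{C_m} P^{B^{(r)}_m}. Then for every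 measurable test statistic S : ℝ^{N×T} → ℝ and every α ∈ (0,1), the p-value p = (1 + #{r ∈ [R] : S(ε̂) ≤ S(ε̃^{(r)})})/(R+1) satisfies P(p ≤ α) ≤ α. -/

import Mathlib

open MeasureTheory ProbabilityTheory Matrix Finset
open scoped ENNReal

noncomputable section

instance matrixMeasurableSpace {α β γ : Type*} [MeasurableSpace γ] :
    MeasurableSpace (Matrix α β γ) :=
  (inferInstance : MeasurableSpace (α → β → γ))

/-- Cluster-wise right transformation by `P^{z_m}`: the rows of cluster `m` are
right-multiplied by `P` when `z m = true`. -/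
def clusterTransform {N T M : ℕ} (c : Fin N → Fin M) (P : Matrix (Fin T) (Fin T) ℝ)
    (z : Fin M → Bool) (E : Matrix (Fin N) (Fin T) ℝ) : Matrix (Fin N) (Fin T) ℝ :=
  fun i t => if z (c i) then (∑ s, E i s * P s t) else E i t

/-- Rows of `E` belonging to cluster `m`. -/
def restrictRows {N T M : ℕ} (c : Fin N → Fin M) (m : Fin M)
    (E : Matrix (Fin N) (Fin T) ℝ) : Matrix {i : Fin N // c i = m} (Fin T) ℝ :=
  fun i t => E i.1 t

/-- Augmented design matrix for cluster `m`: for the vectorized observations `(i,t)` with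
`c i = m`, the `2D` covariates are `X_{i,t}` together with the transformed covariates
`(X^{(d)} P)_{i,t}`. -/
def augDesign {N T D M : ℕ} (X : Fin D → Matrix (Fin N) (Fin T) ℝ)
    (P : Matrix (Fin T) (Fin T) ℝ) (c : Fin N → Fin M) (m : Fin M) :
    Matrix ({i : Fin N // c i = m} × Fin T) (Fin D ⊕ Fin D) ℝ :=
  fun p => Sum.elim (fun d => X d p.1.1 p.2) (fun d => (X d * P) p.1.1 p.2)

/-- Mosaic residuals: cluster-by-cluster OLS residuals of the vectorized entries of `V`
regressed on the augmented design of that cluster. -/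
def mosaicResid {N T D M : ℕ} (X : Fin D → Matrix (Fin N) (Fin T) ℝ)
    (P : Matrix (Fin T) (Fin T) ℝ) (c : Fin N → Fin M)
    (V : Matrix (Fin N) (Fin T) ℝ) : Matrix (Fin N) (Fin T) ℝ :=
  fun i t =>
    ((1 - augDesign X P c (c i) * ((augDesign X P c (c i))ᵀ * augDesign X P c (c i))⁻¹ *
        (augDesign X P c (c i))ᵀ).mulVec (fun q => V q.1.1 q.2)) (⟨i, rfl⟩, t)

/-! ### Auxiliary lemmas -/

section Aux

variable {N T D M : ℕ} (c : Fin N → Fin M) (P : Matrix (Fin T) (Fin T) ℝ)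

lemma clusterTransform_false (E : Matrix (Fin N) (Fin T) ℝ) :
    clusterTransform c P (fun _ => false) E = E := by
  funext i t; simp [clusterTransform]

lemma clusterTransform_comp (hPidem : P * P = 1) (z z' : Fin M → Bool)
    (E : Matrix (Fin N) (Fin T) ℝ) :
    clusterTransform c P z (clusterTransform c P z' E) =
      clusterTransform c P (fun m => xor (z m) (z' m)) E := by
  funext i t
  rcases hz : z (c i) <;> rcases hz' : z' (c i) <;>
    simp [clusterTransform, hz, hz']
  have h1 : ∀ s, (∑ u, E i u * P u s) = (E * P) i s := fun s => (Matrix.mul_apply).symm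
  calc (∑ s, (∑ u, E i u * P u s) * P s t)
      = ∑ s, (E * P) i s * P s t := by simp [h1]
    _ = ((E * P) * P) i t := (Matrix.mul_apply).symm
    _ = E i t := by rw [Matrix.mul_assoc, hPidem, Matrix.mul_one]

lemma measurable_clusterTransform (z : Fin M → Bool) :
    Measurable (clusterTransform c P z) := by
  apply measurable_pi_lambda _ fun i => measurable_pi_lambda _ fun t => ?_
  by_cases hz : z (c i)
  · simp only [clusterTransform, hz, if_true]
    exact Finset.measurable_sum _ fun s _ =>
      ((measurable_pi_apply s).comp (measurable_pi_apply i)).mul_const _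
  · simp only [clusterTransform, hz, if_false]
    exact (measurable_pi_apply t).comp (measurable_pi_apply i)

lemma measurable_mosaicResid (X : Fin D → Matrix (Fin N) (Fin T) ℝ) :
    Measurable (mosaicResid X P c) := by
  apply measurable_pi_lambda _ fun i => measurable_pi_lambda _ fun t => ?_
  simp only [mosaicResid, Matrix.mulVec, dotProduct]
  refine Finset.measurable_sum _ fun q _ => ?_
  have h : Measurable fun (V : Matrix (Fin N) (Fin T) ℝ) => V q.1.1 q.2 :=
    (measurable_pi_apply q.2).comp (measurable_pi_apply q.1.1)
  exact h.const_mul _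

end Aux
section MatrixLemmas

open Kronecker

variable {N T D M : ℕ} (X : Fin D → Matrix (Fin N) (Fin T) ℝ) (c : Fin N → Fin M)
  (P : Matrix (Fin T) (Fin T) ℝ)

def Qmat (m : Fin M) : Matrix ({i : Fin N // c i = m} × Fin T)
    ({i : Fin N // c i = m} × Fin T) ℝ :=
  (1 : Matrix {i : Fin N // c i = m} {i : Fin N // c i = m} ℝ) ⊗ₖ P

def swapMat (D : ℕ) : Matrix (Fin D ⊕ Fin D) (Fin D ⊕ Fin D) ℝ :=
  Matrix.fromBlocks 0 1 1 0

lemma swapMat_mul_self : swapMat D * swapMat D = 1 := by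
  simp [swapMat, Matrix.fromBlocks_multiply, ← Matrix.fromBlocks_one]

lemma swapMat_transpose : (swapMat D)ᵀ = swapMat D := by
  simp [swapMat, Matrix.fromBlocks_transpose]

lemma Psymm_apply (hPsymm : Pᵀ = P) (a b : Fin T) : P a b = P b a := by
  conv_lhs => rw [← hPsymm]
  exact Matrix.transpose_apply P a b

lemma Qmat_transpose (hPsymm : Pᵀ = P) (m : Fin M) : (Qmat c P m)ᵀ = Qmat c P m := by
  rw [Qmat, ← Matrix.kroneckerMap_transpose, Matrix.transpose_one, hPsymm]

lemma Qmat_mul_self (hPidem : P * P = 1) (m : Fin M) : Qmat c P m * Qmat c P m = 1 := by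
  rw [Qmat, ← Matrix.mul_kronecker_mul, Matrix.one_mul, hPidem, Matrix.one_kronecker_one]

lemma Qmat_mulVec (hPsymm : Pᵀ = P) (m : Fin M)
    (v : {i : Fin N // c i = m} × Fin T → ℝ) (q : {i : Fin N // c i = m} × Fin T) :
    (Qmat c P m).mulVec v q = ∑ s, v (q.1, s) * P s q.2 := by
  simp only [Matrix.mulVec, dotProduct, Fintype.sum_prod_type, Qmat, Matrix.kroneckerMap_apply,
    Matrix.one_apply, ite_mul, zero_mul, one_mul]
  rw [Finset.sum_comm]
  simp only [Finset.sum_ite_eq, mem_univ, if_true]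
  exact Finset.sum_congr rfl fun s _ => by rw [Psymm_apply P hPsymm q.2 s, mul_comm]

lemma augDesign_eq (m : Fin M) :
    augDesign X P c m = Matrix.fromCols (Matrix.of fun p d => X d p.1.1 p.2)
      (Matrix.of fun p d => (X d * P) p.1.1 p.2) := rfl

lemma Qmat_mul_aug (hPsymm : Pᵀ = P) (hPidem : P * P = 1) (m : Fin M) :
    Qmat c P m * augDesign X P c m = augDesign X P c m * swapMat D := by
  have h1 : augDesign X P c m * swapMat D =
      Matrix.fromCols (Matrix.of fun p d => (X d * P) p.1.1 p.2)
        (Matrix.of fun p d => X d p.1.1 p.2) := by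
    rw [augDesign_eq, swapMat, Matrix.fromCols_mul_fromBlocks]
    simp
  rw [h1]
  ext p j
  cases j with
  | inl d =>
    simp only [Matrix.mul_apply, Matrix.fromCols, Matrix.of_apply, Sum.elim_inl,
      Fintype.sum_prod_type, Qmat, Matrix.kroneckerMap_apply, Matrix.one_apply, ite_mul, zero_mul,
      one_mul, augDesign_eq]
    rw [Finset.sum_comm]
    simp only [Finset.sum_ite_eq, mem_univ, if_true]
    exact Finset.sum_congr rfl fun s _ => by rw [Psymm_apply P hPsymm p.2 s, mul_comm]
  | inr d =>
    simp only [Matrix.mul_apply, Matrix.fromCols, Matrix.of_apply, Sum.elim_inr,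
      Fintype.sum_prod_type, Qmat, Matrix.kroneckerMap_apply, Matrix.one_apply, ite_mul, zero_mul,
      one_mul, augDesign_eq]
    rw [Finset.sum_comm]
    simp only [Finset.sum_ite_eq, mem_univ, if_true]
    have h2 : X d p.1.1 p.2 = ((X d * P) * P) p.1.1 p.2 := by
      rw [Matrix.mul_assoc, hPidem, Matrix.mul_one]
    rw [h2, Matrix.mul_apply]
    exact Finset.sum_congr rfl fun s _ => by
      rw [Matrix.mul_apply, Psymm_apply P hPsymm p.2 s, mul_comm]

lemma aug_transpose_Qmat (hPsymm : Pᵀ = P) (hPidem : P * P = 1) (m : Fin M) :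
    (augDesign X P c m)ᵀ * Qmat c P m = swapMat D * (augDesign X P c m)ᵀ := by
  have h := congrArg Matrix.transpose (Qmat_mul_aug X c P hPsymm hPidem m)
  rw [Matrix.transpose_mul, Matrix.transpose_mul, Qmat_transpose c P hPsymm,
    swapMat_transpose] at h
  exact h

lemma swap_comm_AtA (hPsymm : Pᵀ = P) (hPidem : P * P = 1) (m : Fin M) :
    swapMat D * ((augDesign X P c m)ᵀ * augDesign X P c m) =
      ((augDesign X P c m)ᵀ * augDesign X P c m) * swapMat D := by
  set A := augDesign X P c m
  calc swapMat D * (Aᵀ * A) = (swapMat D * Aᵀ) * A := by rw [Matrix.mul_assoc]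
    _ = (Aᵀ * Qmat c P m) * A := by rw [aug_transpose_Qmat X c P hPsymm hPidem m]
    _ = Aᵀ * (Qmat c P m * A) := by rw [Matrix.mul_assoc]
    _ = Aᵀ * (A * swapMat D) := by rw [Qmat_mul_aug X c P hPsymm hPidem m]
    _ = (Aᵀ * A) * swapMat D := by rw [Matrix.mul_assoc]

lemma swap_comm_inv (hPsymm : Pᵀ = P) (hPidem : P * P = 1) (m : Fin M)
    (hrank : IsUnit ((augDesign X P c m)ᵀ * augDesign X P c m)) :
    swapMat D * ((augDesign X P c m)ᵀ * augDesign X P c m)⁻¹ =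
      ((augDesign X P c m)ᵀ * augDesign X P c m)⁻¹ * swapMat D := by
  set A := augDesign X P c m
  set U := Aᵀ * A with hU
  have hdet : IsUnit U.det := (Matrix.isUnit_iff_isUnit_det _).mp hrank
  have h1 : U * U⁻¹ = 1 := Matrix.mul_nonsing_inv _ hdet
  have h2 : U⁻¹ * U = 1 := Matrix.nonsing_inv_mul _ hdet
  calc swapMat D * U⁻¹ = (U⁻¹ * U) * (swapMat D * U⁻¹) := by rw [h2, Matrix.one_mul]
    _ = U⁻¹ * ((U * swapMat D) * U⁻¹) := by simp only [Matrix.mul_assoc]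
    _ = U⁻¹ * ((swapMat D * U) * U⁻¹) := by rw [← swap_comm_AtA X c P hPsymm hPidem m]
    _ = U⁻¹ * swapMat D * (U * U⁻¹) := by simp only [Matrix.mul_assoc]
    _ = U⁻¹ * swapMat D := by rw [h1, Matrix.mul_one]

lemma resid_comm_Qmat (hPsymm : Pᵀ = P) (hPidem : P * P = 1) (m : Fin M)
    (hrank : IsUnit ((augDesign X P c m)ᵀ * augDesign X P c m)) :
    (1 - augDesign X P c m * ((augDesign X P c m)ᵀ * augDesign X P c m)⁻¹ *
        (augDesign X P c m)ᵀ) * Qmat c P m =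
      Qmat c P m * (1 - augDesign X P c m * ((augDesign X P c m)ᵀ * augDesign X P c m)⁻¹ *
        (augDesign X P c m)ᵀ) := by
  set A := augDesign X P c m
  set G := (Aᵀ * A)⁻¹
  have key : A * G * Aᵀ * Qmat c P m = Qmat c P m * (A * G * Aᵀ) := by
    calc A * G * Aᵀ * Qmat c P m = A * (G * (Aᵀ * Qmat c P m)) := by
          simp only [Matrix.mul_assoc]
      _ = A * (G * (swapMat D * Aᵀ)) := by rw [aug_transpose_Qmat X c P hPsymm hPidem m]
      _ = A * ((G * swapMat D) * Aᵀ) := by simp only [Matrix.mul_assoc]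
      _ = A * ((swapMat D * G) * Aᵀ) := by rw [← swap_comm_inv X c P hPsymm hPidem m hrank]
      _ = (A * swapMat D) * (G * Aᵀ) := by simp only [Matrix.mul_assoc]
      _ = (Qmat c P m * A) * (G * Aᵀ) := by rw [← Qmat_mul_aug X c P hPsymm hPidem m]
      _ = Qmat c P m * (A * G * Aᵀ) := by simp only [Matrix.mul_assoc]
  rw [Matrix.sub_mul, Matrix.mul_sub, Matrix.one_mul, Matrix.mul_one, key]

lemma resid_mul_aug (m : Fin M)
    (hrank : IsUnit ((augDesign X P c m)ᵀ * augDesign X P c m)) :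
    (1 - augDesign X P c m * ((augDesign X P c m)ᵀ * augDesign X P c m)⁻¹ *
        (augDesign X P c m)ᵀ) * augDesign X P c m = 0 := by
  set A := augDesign X P c m
  have hdet : IsUnit (Aᵀ * A).det := (Matrix.isUnit_iff_isUnit_det _).mp hrank
  have h2 : (Aᵀ * A)⁻¹ * (Aᵀ * A) = 1 := Matrix.nonsing_inv_mul _ hdet
  rw [Matrix.sub_mul, Matrix.one_mul]
  have key : A * (Aᵀ * A)⁻¹ * Aᵀ * A = A := by
    calc A * (Aᵀ * A)⁻¹ * Aᵀ * A = A * ((Aᵀ * A)⁻¹ * (Aᵀ * A)) := by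
          simp only [Matrix.mul_assoc]
      _ = A := by rw [h2, Matrix.mul_one]
  rw [key, sub_self]

end MatrixLemmas
section Equivariance

variable {N T D M : ℕ} (X : Fin D → Matrix (Fin N) (Fin T) ℝ) (c : Fin N → Fin M)
  (P : Matrix (Fin T) (Fin T) ℝ)

lemma mosaicResid_clusterTransform (hPsymm : Pᵀ = P) (hPidem : P * P = 1)
    (hrank : ∀ m : Fin M, IsUnit ((augDesign X P c m)ᵀ * augDesign X P c m))
    (z : Fin M → Bool) (V : Matrix (Fin N) (Fin T) ℝ) :
    mosaicResid X P c (clusterTransform c P z V) =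
      clusterTransform c P z (mosaicResid X P c V) := by
  funext i t
  set A := augDesign X P c (c i) with hA
  set Mr := 1 - A * (Aᵀ * A)⁻¹ * Aᵀ with hMr
  set v : {j : Fin N // c j = c i} × Fin T → ℝ := fun q => V q.1.1 q.2 with hv
  by_cases hz : z (c i) = true
  · have hvec : (fun q : {j : Fin N // c j = c i} × Fin T =>
        clusterTransform c P z V q.1.1 q.2) = (Qmat c P (c i)).mulVec v := by
      funext q
      have hq : c q.1.1 = c i := q.1.2
      rw [Qmat_mulVec c P hPsymm (c i) v q]
      simp only [clusterTransform, hq, hz, if_true]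
      rfl
    have hcomm := resid_comm_Qmat X c P hPsymm hPidem (c i) (hrank (c i))
    calc mosaicResid X P c (clusterTransform c P z V) i t
        = Mr.mulVec ((Qmat c P (c i)).mulVec v) (⟨i, rfl⟩, t) := by
          rw [mosaicResid, hvec]
      _ = (Mr * Qmat c P (c i)).mulVec v (⟨i, rfl⟩, t) := by
          rw [Matrix.mulVec_mulVec]
      _ = (Qmat c P (c i) * Mr).mulVec v (⟨i, rfl⟩, t) := by rw [hcomm]
      _ = (Qmat c P (c i)).mulVec (Mr.mulVec v) (⟨i, rfl⟩, t) := by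
          rw [Matrix.mulVec_mulVec]
      _ = ∑ s, (Mr.mulVec v) (⟨i, rfl⟩, s) * P s t := by
          rw [Qmat_mulVec c P hPsymm (c i) _ (⟨i, rfl⟩, t)]
      _ = ∑ s, mosaicResid X P c V i s * P s t := rfl
      _ = clusterTransform c P z (mosaicResid X P c V) i t := by
          simp only [clusterTransform, hz, if_true]
  · have hz' : z (c i) = false := by simpa using hz
    have hvec : (fun q : {j : Fin N // c j = c i} × Fin T =>
        clusterTransform c P z V q.1.1 q.2) = v := by
      funext q
      have hq : c q.1.1 = c i := q.1.2
      simp only [clusterTransform, hq, hz', if_false, Bool.false_eq_true]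
      rfl
    calc mosaicResid X P c (clusterTransform c P z V) i t
        = Mr.mulVec v (⟨i, rfl⟩, t) := by rw [mosaicResid, hvec]
      _ = mosaicResid X P c V i t := rfl
      _ = clusterTransform c P z (mosaicResid X P c V) i t := by
          simp only [clusterTransform, hz', if_false, Bool.false_eq_true]

lemma mosaicResid_shift
    (hrank : ∀ m : Fin M, IsUnit ((augDesign X P c m)ᵀ * augDesign X P c m))
    (β : Fin D → ℝ) (W V : Matrix (Fin N) (Fin T) ℝ)
    (hW : ∀ i t, W i t = (∑ d, X d i t * β d) + V i t) :
    mosaicResid X P c W = mosaicResid X P c V := by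
  funext i t
  set A := augDesign X P c (c i) with hA
  set Mr := 1 - A * (Aᵀ * A)⁻¹ * Aᵀ with hMr
  have hvec : (fun q : {j : Fin N // c j = c i} × Fin T => W q.1.1 q.2)
      = (fun q => V q.1.1 q.2) + A.mulVec (Sum.elim β fun _ => 0) := by
    funext q
    simp only [Pi.add_apply, hW q.1.1 q.2, Matrix.mulVec, dotProduct,
      Fintype.sum_sum_type, hA, augDesign, Sum.elim_inl, Sum.elim_inr, mul_zero,
      Finset.sum_const_zero, add_zero]
    ring
  rw [mosaicResid, mosaicResid, hvec, Matrix.mulVec_add, Matrix.mulVec_mulVec,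
    resid_mul_aug X c P (c i) (hrank (c i)), Matrix.zero_mulVec, Pi.add_apply]
  simp

end Equivariance
section MeasureLemmas

lemma map_pi_of_iIndepFun {Ω : Type*} [MeasurableSpace Ω] (μ : Measure Ω)
    [IsProbabilityMeasure μ] {ι : Type*} [Fintype ι] {β : ι → Type*}
    [∀ i, MeasurableSpace (β i)] (f : ∀ i, Ω → β i) (hf : ∀ i, Measurable (f i))
    (hind : iIndepFun f μ) :
    Measure.map (fun ω i => f i ω) μ = Measure.pi (fun i => Measure.map (f i) μ) := by
  haveI : ∀ i, IsProbabilityMeasure (Measure.map (f i) μ) := fun i =>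
    Measure.isProbabilityMeasure_map (hf i).aemeasurable
  refine (Measure.pi_eq fun s hs => ?_).symm
  rw [Measure.map_apply (measurable_pi_lambda _ hf) (MeasurableSet.univ_pi hs)]
  have hpre : (fun ω i => f i ω) ⁻¹' (Set.pi Set.univ s) = ⋂ i ∈ Finset.univ, f i ⁻¹' s i := by
    ext ω; simp [Set.mem_pi]
  rw [hpre, hind.measure_inter_preimage_eq_mul Finset.univ (fun i _ => hs i)]
  exact Finset.prod_congr rfl fun i _ => (Measure.map_apply (hf i) (hs i)).symm

variable {N T M : ℕ} (c : Fin N → Fin M) (P : Matrix (Fin T) (Fin T) ℝ)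

lemma restrictRows_mul (m : Fin M) (E : Matrix (Fin N) (Fin T) ℝ) :
    restrictRows c m (E * P) = restrictRows c m E * P := by
  funext i t
  simp [restrictRows, Matrix.mul_apply]

lemma measurable_restrictRows (m : Fin M) :
    Measurable (restrictRows (T := T) c m) :=
  measurable_pi_lambda _ fun i => measurable_pi_lambda _ fun t =>
    (measurable_pi_apply t).comp (measurable_pi_apply i.1)

lemma measurable_mul_right {ι : Type*} [Fintype ι] :
    Measurable (fun E : Matrix ι (Fin T) ℝ => E * P) := by
  apply measurable_pi_lambda _ fun i => measurable_pi_lambda _ fun t => ?_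
  simp only [Matrix.mul_apply]
  exact Finset.measurable_sum _ fun s _ =>
    (((measurable_pi_apply s).comp (measurable_pi_apply i))).mul_const _

def assembleRows {N' T' M' : ℕ} (c' : Fin N' → Fin M')
    (g : ∀ m : Fin M', Matrix {i : Fin N' // c' i = m} (Fin T') ℝ) :
    Matrix (Fin N') (Fin T') ℝ :=
  fun i t => g (c' i) ⟨i, rfl⟩ t

lemma measurable_assemble :
    Measurable (assembleRows (T' := T) c) :=
  measurable_pi_lambda _ fun i => measurable_pi_lambda _ fun t =>
    (measurable_pi_apply t).comp
      ((measurable_pi_apply (⟨i, rfl⟩ : {j : Fin N // c j = c i})).comp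
        (measurable_pi_apply (c i)))

lemma law_clusterTransform {Ω : Type*} [MeasurableSpace Ω] (μ : Measure Ω)
    [IsProbabilityMeasure μ] (ε : Ω → Matrix (Fin N) (Fin T) ℝ) (hmeas : Measurable ε)
    (hmarginv : ∀ m : Fin M,
      Measure.map (fun ω => restrictRows c m (ε ω)) μ =
        Measure.map (fun ω => restrictRows c m (ε ω * P)) μ)
    (hnull : iIndepFun
      (fun m ω => restrictRows c m (ε ω)) μ) (z : Fin M → Bool) :
    Measure.map (fun ω => clusterTransform c P z (ε ω)) μ = Measure.map ε μ := by
  classical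
  set f : ∀ m : Fin M, Ω → Matrix {i : Fin N // c i = m} (Fin T) ℝ :=
    fun m ω => restrictRows c m (ε ω) with hf
  have hfmeas : ∀ m, Measurable (f m) := fun m => (measurable_restrictRows c m).comp hmeas
  set g : ∀ m : Fin M, Matrix {i : Fin N // c i = m} (Fin T) ℝ →
      Matrix {i : Fin N // c i = m} (Fin T) ℝ :=
    fun m E => if z m then E * P else E with hg
  have hgmeas : ∀ m, Measurable (g m) := by
    intro m
    by_cases hz : z m = true
    · simpa [hg, hz] using measurable_mul_right P
    · simpa [hg, hz] using measurable_id'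
  have hind2 : iIndepFun (fun m => g m ∘ f m) μ :=
    hnull.comp g hgmeas
  have hgf : ∀ m, Measurable (g m ∘ f m) := fun m => (hgmeas m).comp (hfmeas m)
  have h1 : Measure.map (fun ω m => f m ω) μ =
      Measure.pi (fun m => Measure.map (f m) μ) := map_pi_of_iIndepFun μ f hfmeas hnull
  have h2 : Measure.map (fun ω m => g m (f m ω)) μ =
      Measure.pi (fun m => Measure.map (g m ∘ f m) μ) :=
    map_pi_of_iIndepFun μ (fun m => g m ∘ f m) hgf hind2
  have h3 : ∀ m, Measure.map (g m ∘ f m) μ = Measure.map (f m) μ := by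
    intro m
    by_cases hz : z m = true
    · have : (g m ∘ f m) = fun ω => restrictRows c m (ε ω * P) := by
        funext ω
        simp only [hg, hf, Function.comp, hz, if_true, restrictRows_mul]
      rw [this, hf, ← hmarginv m]
    · have : (g m ∘ f m) = f m := by
        funext ω
        simp only [hg, Function.comp, hz, if_false]
        simp [Bool.not_eq_true] at hz
        simp [hz]
      rw [this]
  have h12 : Measure.map (fun ω m => g m (f m ω)) μ = Measure.map (fun ω m => f m ω) μ := by
    rw [h1, h2]
    exact congrArg Measure.pi (funext h3)
  -- assemble
  have hassemble1 : (assembleRows (T' := T) c) ∘ (fun ω m => f m ω) = ε := by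
    funext ω; funext i t; rfl
  have hassemble2 : (assembleRows (T' := T) c) ∘ (fun ω m => g m (f m ω)) =
      fun ω => clusterTransform c P z (ε ω) := by
    funext ω; funext i t
    simp only [Function.comp, hg, hf, clusterTransform, assembleRows]
    by_cases hz : z (c i) = true
    · simp only [hz, if_true]
      rfl
    · simp [Bool.not_eq_true] at hz
      simp only [hz, if_false, Bool.false_eq_true]
      rfl
  calc Measure.map (fun ω => clusterTransform c P z (ε ω)) μ
      = Measure.map ((assembleRows (T' := T) c) ∘ (fun ω m => g m (f m ω))) μ := by
        rw [hassemble2]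
    _ = Measure.map _ (Measure.map (fun ω m => g m (f m ω)) μ) :=
        (Measure.map_map (measurable_assemble c) (measurable_pi_lambda _ hgf)).symm
    _ = Measure.map _ (Measure.map (fun ω m => f m ω) μ) := by rw [h12]
    _ = Measure.map ε μ := by
        rw [Measure.map_map (measurable_assemble c) (measurable_pi_lambda _ hfmeas), hassemble1]

end MeasureLemmas
section Counting

variable {N T M R : ℕ} (S : Matrix (Fin N) (Fin T) ℝ → ℝ) (c : Fin N → Fin M)
  (P : Matrix (Fin T) (Fin T) ℝ)

/-- The pattern assigned to index `k ∈ {0,…,R}`: identity for `k = 0`, `b r` for `k = r+1`. -/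
def gpat {M R : ℕ} (b : Fin R → Fin M → Bool) : Fin (R + 1) → Fin M → Bool :=
  Fin.cases (fun _ => false) b

/-- Number of indices `k` whose transformed statistic dominates that of index `j`. -/
def countGE (b : Fin R → Fin M → Bool) (j : Fin (R + 1))
    (E : Matrix (Fin N) (Fin T) ℝ) : ℕ :=
  (Finset.univ.filter fun k : Fin (R + 1) =>
    S (clusterTransform c P (gpat b j) E) ≤ S (clusterTransform c P (gpat b k) E)).card

lemma countGE_zero (b : Fin R → Fin M → Bool) (E : Matrix (Fin N) (Fin T) ℝ) :
    countGE S c P b 0 E =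
      1 + (Finset.univ.filter fun r : Fin R =>
        S E ≤ S (clusterTransform c P (b r) E)).card := by
  rw [countGE, Finset.card_filter, Finset.card_filter, Fin.sum_univ_succ]
  have h0 : gpat b (0 : Fin (R + 1)) = fun _ => false := by
    funext mm; rw [gpat, Fin.cases_zero]
  have hs : ∀ r : Fin R, gpat b r.succ = b r := by
    intro r; funext mm; rw [gpat, Fin.cases_succ]
  simp [h0, hs, clusterTransform_false, le_refl]

lemma card_filter_rank_le {n m : ℕ} (W : Fin n → ℝ) :
    ((Finset.univ : Finset (Fin n)).filter fun j =>
      (Finset.univ.filter fun k => W j ≤ W k).card ≤ m).card ≤ m := by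
  classical
  set J := (Finset.univ : Finset (Fin n)).filter fun j =>
    (Finset.univ.filter fun k => W j ≤ W k).card ≤ m with hJ
  rcases J.eq_empty_or_nonempty with h | h
  · simp [h]
  · obtain ⟨j0, hj0, hmin⟩ := J.exists_min_image W h
    have hsub : J ⊆ Finset.univ.filter fun k => W j0 ≤ W k := fun k hk =>
      Finset.mem_filter.2 ⟨Finset.mem_univ _, hmin k hk⟩
    exact le_trans (Finset.card_le_card hsub) (Finset.mem_filter.1 hj0).2

lemma countGE_eq_rank (b : Fin R → Fin M → Bool) (j : Fin (R + 1))
    (E : Matrix (Fin N) (Fin T) ℝ) :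
    countGE S c P b j E = (Finset.univ.filter fun k =>
      (fun k' => S (clusterTransform c P (gpat b k') E)) j ≤
      (fun k' => S (clusterTransform c P (gpat b k') E)) k).card := rfl

/-- The reindexing bijection on sign patterns associated to moving index `j` to `0`. -/
def phiMap {M R : ℕ} (j : Fin (R + 1)) (b : Fin R → Fin M → Bool) : Fin R → Fin M → Bool :=
  fun r mm => xor (gpat b j mm) (gpat b (Equiv.swap 0 j r.succ) mm)

lemma gpat_zero {M R : ℕ} (b : Fin R → Fin M → Bool) :
    gpat b (0 : Fin (R + 1)) = fun _ => false := by
  funext mm; rw [gpat, Fin.cases_zero]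

lemma gpat_succ {M R : ℕ} (b : Fin R → Fin M → Bool) (r : Fin R) :
    gpat b r.succ = b r := by
  funext mm; rw [gpat, Fin.cases_succ]

lemma phiMap_involutive {M R : ℕ} (j : Fin (R + 1)) :
    Function.Involutive (phiMap (M := M) (R := R) j) := by
  intro b
  induction j using Fin.cases with
  | zero =>
    have h : ∀ b' : Fin R → Fin M → Bool, phiMap 0 b' = b' := by
      intro b'; funext r mm
      rw [phiMap, gpat_zero, Equiv.swap_self]
      simp [gpat_succ]
    rw [h, h]
  | succ i =>
    have hfix : ∀ b' : Fin R → Fin M → Bool, ∀ r : Fin R, r ≠ i →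
        phiMap i.succ b' r = fun mm => xor (b' i mm) (b' r mm) := by
      intro b' r hr
      funext mm
      rw [phiMap, gpat_succ]
      rw [Equiv.swap_apply_of_ne_of_ne (Fin.succ_ne_zero r)
        (fun h => hr (Fin.succ_injective _ h)), gpat_succ]
    have hdiag : ∀ b' : Fin R → Fin M → Bool, phiMap i.succ b' i = b' i := by
      intro b'
      funext mm
      rw [phiMap, gpat_succ, Equiv.swap_apply_right, gpat_zero]
      simp
    funext r mm
    by_cases hr : r = i
    · subst hr
      rw [hdiag, hdiag]
    · have h1 : phiMap i.succ (phiMap i.succ b) r =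
          fun mm => xor ((phiMap i.succ b) i mm) ((phiMap i.succ b) r mm) := hfix _ r hr
      have h2 : phiMap i.succ b r = fun mm => xor (b i mm) (b r mm) := hfix _ r hr
      rw [h1]
      simp only [hdiag, h2]
      cases b i mm <;> cases b r mm <;> rfl

lemma countGE_reindex (hPidem : P * P = 1) (j : Fin (R + 1)) (b : Fin R → Fin M → Bool)
    (E : Matrix (Fin N) (Fin T) ℝ) :
    countGE S c P b j E =
      countGE S c P (phiMap j b) 0 (clusterTransform c P (gpat b j) E) := by
  have hact : ∀ k : Fin (R + 1),
      clusterTransform c P (gpat (phiMap j b) k) (clusterTransform c P (gpat b j) E) =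
        clusterTransform c P (gpat b (Equiv.swap 0 j k)) E := by
    intro k
    induction k using Fin.cases with
    | zero =>
      rw [gpat_zero, clusterTransform_false, Equiv.swap_apply_left]
    | succ r =>
      rw [gpat_succ, clusterTransform_comp c P hPidem]
      refine congrArg (fun z : Fin M → Bool => clusterTransform c P z E) ?_
      funext mm
      rcases hb1 : gpat b j mm <;> rcases hb2 : gpat b (Equiv.swap 0 j r.succ) mm <;>
        simp [phiMap, hb1, hb2]
  rw [countGE, countGE]
  have h0 : clusterTransform c P (gpat (phiMap j b) 0) (clusterTransform c P (gpat b j) E) =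
      clusterTransform c P (gpat b j) E := by
    rw [gpat_zero, clusterTransform_false]
  have hcond : ∀ k : Fin (R + 1),
      (S (clusterTransform c P (gpat (phiMap j b) 0) (clusterTransform c P (gpat b j) E)) ≤
        S (clusterTransform c P (gpat (phiMap j b) k) (clusterTransform c P (gpat b j) E))) ↔
      (S (clusterTransform c P (gpat b j) E) ≤
        S (clusterTransform c P (gpat b (Equiv.swap 0 j k)) E)) := by
    intro k
    rw [h0, hact k]
  rw [Finset.filter_congr (fun k _ => hcond k)]
  -- now a reindexing by the permutation `Equiv.swap 0 j`
  apply Finset.card_bij (fun k _ => Equiv.swap 0 j k)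
  · intro k hk
    simp only [Finset.mem_filter, Finset.mem_univ, true_and, Equiv.swap_apply_self] at hk ⊢
    exact hk
  · intro k1 h1 k2 h2 h
    exact (Equiv.swap 0 j).injective h
  · intro y hy
    refine ⟨Equiv.swap 0 j y, ?_, Equiv.swap_apply_self _ _ _⟩
    simp only [Finset.mem_filter, Finset.mem_univ, true_and] at hy ⊢
    exact hy

end Counting

section Measurability

lemma measurable_countGE {N T M R : ℕ} (S : Matrix (Fin N) (Fin T) ℝ → ℝ) (hS : Measurable S)
    (c : Fin N → Fin M) (P : Matrix (Fin T) (Fin T) ℝ) (b : Fin R → Fin M → Bool)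
    (j : Fin (R + 1)) : Measurable (fun E => countGE S c P b j E) := by
  have h : (fun E => countGE S c P b j E) = fun E => ∑ k : Fin (R + 1),
      if S (clusterTransform c P (gpat b j) E) ≤ S (clusterTransform c P (gpat b k) E)
      then 1 else 0 := by
    funext E; rw [countGE, Finset.card_filter]
  rw [h]
  exact Finset.measurable_sum _ fun k _ => Measurable.ite
    (measurableSet_le (hS.comp (measurable_clusterTransform c P _))
      (hS.comp (measurable_clusterTransform c P _))) measurable_const measurable_const

lemma measurableSet_countGE_le {N T M R : ℕ} (S : Matrix (Fin N) (Fin T) ℝ → ℝ)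
    (hS : Measurable S) (c : Fin N → Fin M) (P : Matrix (Fin T) (Fin T) ℝ)
    (b : Fin R → Fin M → Bool) (j : Fin (R + 1)) (m : ℕ) :
    MeasurableSet {E : Matrix (Fin N) (Fin T) ℝ | countGE S c P b j E ≤ m} :=
  measurable_countGE S hS c P b j measurableSet_Iic

end Measurability
/-- **finite-sample validity of the mosaic permutation test.**
Consider panel data `Y_{i,t} = X_{i,t}ᵀβ* + ε_{i,t}` with fixed covariates, a partition of
the `N` units into `M` clusters (membership map `c`), and `P` symmetric with `P² = I`.
Assume (i) marginal invariance of each cluster of errors and (ii) the null hypothesis of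
joint cluster independence.  Let `ε̂` be the mosaic residuals (cluster-wise OLS on the
augmented designs, assumed full column rank), and let `ε̃⁽ʳ⁾` be the randomized residuals
obtained from `R` i.i.d. uniform sign patterns `B⁽ʳ⁾ ∈ {0,1}^M` drawn independently of the
data.  Then for every measurable test statistic `S` and every `α ∈ (0,1)`, the p-value
`p = (1 + #{r : S(ε̂) ≤ S(ε̃⁽ʳ⁾)})/(R+1)` satisfies `P(p ≤ α) ≤ α`. -/
theorem stmt_2 {Ω : Type*} [MeasurableSpace Ω] (μ : Measure Ω) [IsProbabilityMeasure μ]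
    (N T D M R : ℕ) (hM : 0 < M) (hR : 0 < R)
    (c : Fin N → Fin M)
    (X : Fin D → Matrix (Fin N) (Fin T) ℝ) (βstar : Fin D → ℝ)
    (P : Matrix (Fin T) (Fin T) ℝ) (hPsymm : Pᵀ = P) (hPidem : P * P = 1)
    (ε : Ω → Matrix (Fin N) (Fin T) ℝ) (hmeas : Measurable ε)
    (Y : Ω → Matrix (Fin N) (Fin T) ℝ)
    (hY : ∀ ω i t, Y ω i t = (∑ d, X d i t * βstar d) + ε ω i t)
    (hmarginv : ∀ m : Fin M,
      Measure.map (fun ω => restrictRows c m (ε ω)) μ =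
        Measure.map (fun ω => restrictRows c m (ε ω * P)) μ)
    (hnull : iIndepFun
      (fun m ω => restrictRows c m (ε ω)) μ)
    (hrank : ∀ m : Fin M, IsUnit ((augDesign X P c m)ᵀ * augDesign X P c m))
    (B : Ω → Fin R → Fin M → Bool) (hBmeas : Measurable B)
    (hBunif : Measure.map B μ = (PMF.uniformOfFintype (Fin R → Fin M → Bool)).toMeasure)
    (hBindep : IndepFun ε B μ)
    (S : Matrix (Fin N) (Fin T) ℝ → ℝ) (hS : Measurable S)
    (pval : Ω → ℝ)
    (hpval : ∀ ω, pval ω =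
      (1 + (Nat.card {r : Fin R // S (mosaicResid X P c (Y ω)) ≤
        S (clusterTransform c P (B ω r) (mosaicResid X P c (Y ω)))} : ℝ)) / (R + 1)) :
    ∀ α : ℝ, 0 < α → α < 1 → μ {ω | pval ω ≤ α} ≤ ENNReal.ofReal α := by
  intro α hα0 hα1
  classical
  set eps : Ω → Matrix (Fin N) (Fin T) ℝ := fun ω => mosaicResid X P c (ε ω) with heps
  have hepsY : ∀ ω, mosaicResid X P c (Y ω) = eps ω := fun ω =>
    mosaicResid_shift X c P hrank βstar (Y ω) (ε ω) (hY ω)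
  have hepsmeas : Measurable eps := (measurable_mosaicResid c P X).comp hmeas
  set mfl : ℕ := Nat.floor (α * ((R : ℝ) + 1)) with hmfl
  have hRpos : (0 : ℝ) < (R : ℝ) + 1 := by positivity
  -- Step 1: identify the event
  have hset : {ω | pval ω ≤ α} = {ω | countGE S c P (B ω) 0 (eps ω) ≤ mfl} := by
    ext ω
    have hcard : (Nat.card {r : Fin R // S (mosaicResid X P c (Y ω)) ≤
        S (clusterTransform c P (B ω r) (mosaicResid X P c (Y ω)))} : ℝ)
        = ((Finset.univ.filter fun r : Fin R =>
            S (eps ω) ≤ S (clusterTransform c P (B ω r) (eps ω))).card : ℝ) := by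
      rw [hepsY ω, Nat.card_eq_fintype_card, Fintype.card_subtype]
    simp only [Set.mem_setOf_eq]
    rw [hpval ω, hcard, countGE_zero, div_le_iff₀ hRpos, hmfl,
      Nat.le_floor_iff (by positivity)]
    push_cast
    constructor <;> intro h <;> linarith
  rw [hset]
  -- uniform distribution of B
  set u : ℝ≥0∞ := ((Fintype.card (Fin R → Fin M → Bool) : ℝ≥0∞))⁻¹ with hu
  have huB : ∀ b : Fin R → Fin M → Bool, μ (B ⁻¹' {b}) = u := by
    intro b
    rw [← Measure.map_apply hBmeas (measurableSet_singleton b), hBunif,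
      PMF.toMeasure_apply_singleton _ _ (measurableSet_singleton b),
      PMF.uniformOfFintype_apply]
  -- events
  set Ev : (Fin R → Fin M → Bool) → Fin (R + 1) → Set Ω :=
    fun b j => eps ⁻¹' {E | countGE S c P b j E ≤ mfl} with hEv
  have hEvmeas : ∀ b j, MeasurableSet (Ev b j) := fun b j =>
    hepsmeas (measurableSet_countGE_le S hS c P b j mfl)
  -- decomposition over the value of B
  have hsplit : ∀ b j, μ (B ⁻¹' {b} ∩ Ev b j) = u * μ (Ev b j) := by
    intro b j
    have hEv' : Ev b j =
        ε ⁻¹' ((mosaicResid X P c) ⁻¹' {E | countGE S c P b j E ≤ mfl}) := rfl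
    rw [Set.inter_comm, hEv',
      (indepFun_iff_measure_inter_preimage_eq_mul.mp hBindep) _ _
        (measurable_mosaicResid c P X (measurableSet_countGE_le S hS c P b j mfl))
        (measurableSet_singleton b),
      mul_comm, huB b, ← hEv']
  have hdecomp : μ {ω | countGE S c P (B ω) 0 (eps ω) ≤ mfl}
      = ∑ b : Fin R → Fin M → Bool, u * μ (Ev b 0) := by
    have hcover : {ω | countGE S c P (B ω) 0 (eps ω) ≤ mfl}
        = ⋃ b ∈ (Finset.univ : Finset (Fin R → Fin M → Bool)), (B ⁻¹' {b} ∩ Ev b 0) := by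
      ext ω
      simp only [Set.mem_setOf_eq, Set.mem_iUnion, Finset.mem_univ, Set.mem_inter_iff,
        Set.mem_preimage, Set.mem_singleton_iff, exists_prop, true_and]
      constructor
      · intro h; exact ⟨B ω, rfl, h⟩
      · rintro ⟨b, hb, h⟩; rw [hb]; exact h
    rw [hcover, measure_biUnion_finset ?_ ?_]
    · exact Finset.sum_congr rfl fun b _ => hsplit b 0
    · intro b1 _ b2 _ hne
      refine Set.disjoint_left.2 fun ω hω1 hω2 => hne ?_
      have h1 : B ω = b1 := hω1.1
      have h2 : B ω = b2 := hω2.1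
      rw [← h1, h2]
    · exact fun b _ => (hBmeas (measurableSet_singleton b)).inter (hEvmeas b 0)
  -- law invariance of eps under cluster transforms
  have hlaw : ∀ z : Fin M → Bool,
      Measure.map (fun ω => clusterTransform c P z (eps ω)) μ = Measure.map eps μ := by
    intro z
    have h1 : (fun ω => clusterTransform c P z (eps ω))
        = (mosaicResid X P c) ∘ (fun ω => clusterTransform c P z (ε ω)) := by
      funext ω
      exact (mosaicResid_clusterTransform X c P hPsymm hPidem hrank z (ε ω)).symm
    have hm2 : Measurable fun ω => clusterTransform c P z (ε ω) :=
      (measurable_clusterTransform c P z).comp hmeas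
    rw [h1, ← Measure.map_map (measurable_mosaicResid c P X) hm2,
      law_clusterTransform c P μ ε hmeas hmarginv hnull z, heps,
      Measure.map_map (measurable_mosaicResid c P X) hmeas]
    rfl
  have hprob : ∀ (z : Fin M → Bool) (A : Set (Matrix (Fin N) (Fin T) ℝ)), MeasurableSet A →
      μ ((fun ω => clusterTransform c P z (eps ω)) ⁻¹' A) = μ (eps ⁻¹' A) := by
    intro z A hA
    have hm3 : Measurable fun ω => clusterTransform c P z (eps ω) :=
      (measurable_clusterTransform c P z).comp hepsmeas
    rw [← Measure.map_apply hm3 hA, hlaw z, Measure.map_apply hepsmeas hA]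
  -- invariance of the event measures
  have hinv : ∀ (j : Fin (R + 1)) (b : Fin R → Fin M → Bool),
      μ (Ev b j) = μ (Ev (phiMap j b) 0) := by
    intro j b
    have hid : Ev b j = (fun ω => clusterTransform c P (gpat b j) (eps ω)) ⁻¹'
        {E | countGE S c P (phiMap j b) 0 E ≤ mfl} := by
      ext ω
      simp only [hEv, Set.mem_preimage, Set.mem_setOf_eq]
      rw [countGE_reindex S c P hPidem j b (eps ω)]
    rw [hid, hprob (gpat b j) _ (measurableSet_countGE_le S hS c P (phiMap j b) 0 mfl)]
  -- per-pattern bound on the sum over j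
  have hsumb : ∀ b : Fin R → Fin M → Bool,
      (∑ j : Fin (R + 1), μ (Ev b j)) ≤ (mfl : ℝ≥0∞) := by
    intro b
    have hm : ∀ ω, (∑ j : Fin (R + 1),
        Set.indicator (Ev b j) (fun _ => (1 : ℝ≥0∞)) ω) ≤ (mfl : ℝ≥0∞) := by
      intro ω
      have hind : ∀ j, Set.indicator (Ev b j) (fun _ => (1 : ℝ≥0∞)) ω
          = if countGE S c P b j (eps ω) ≤ mfl then 1 else 0 := by
        intro j
        by_cases h : countGE S c P b j (eps ω) ≤ mfl <;>
          simp [Set.indicator_apply, hEv, h]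
      calc (∑ j : Fin (R + 1), Set.indicator (Ev b j) (fun _ => (1 : ℝ≥0∞)) ω)
          = ∑ j : Fin (R + 1),
              if countGE S c P b j (eps ω) ≤ mfl then 1 else 0 := by
            exact Finset.sum_congr rfl fun j _ => hind j
        _ = ((Finset.univ.filter fun j : Fin (R + 1) =>
              countGE S c P b j (eps ω) ≤ mfl).card : ℝ≥0∞) := by
            rw [Finset.sum_boole]
        _ ≤ (mfl : ℝ≥0∞) := by
            have hcF := card_filter_rank_le (m := mfl)
              (fun k : Fin (R + 1) => S (clusterTransform c P (gpat b k) (eps ω)))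
            exact_mod_cast hcF
    calc (∑ j : Fin (R + 1), μ (Ev b j))
        = ∑ j : Fin (R + 1), ∫⁻ ω, Set.indicator (Ev b j) (fun _ => (1 : ℝ≥0∞)) ω ∂μ :=
          Finset.sum_congr rfl fun j _ => (lintegral_indicator_one (hEvmeas b j)).symm
      _ = ∫⁻ ω, (∑ j : Fin (R + 1),
            Set.indicator (Ev b j) (fun _ => (1 : ℝ≥0∞)) ω) ∂μ :=
          (lintegral_finset_sum _ fun j _ =>
            measurable_const.indicator (hEvmeas b j)).symm
      _ ≤ ∫⁻ _, (mfl : ℝ≥0∞) ∂μ := lintegral_mono hm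
      _ = (mfl : ℝ≥0∞) := by simp [lintegral_const, measure_univ]
  -- reindexing
  have htot : ∀ j : Fin (R + 1),
      (∑ b : Fin R → Fin M → Bool, u * μ (Ev b 0))
        = ∑ b : Fin R → Fin M → Bool, u * μ (Ev b j) := by
    intro j
    calc (∑ b : Fin R → Fin M → Bool, u * μ (Ev b 0))
        = ∑ b : Fin R → Fin M → Bool, u * μ (Ev (phiMap j b) 0) :=
          (Equiv.sum_comp (Function.Involutive.toPerm _ (phiMap_involutive j))
            (fun b => u * μ (Ev b 0))).symm
      _ = ∑ b : Fin R → Fin M → Bool, u * μ (Ev b j) :=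
          Finset.sum_congr rfl fun b _ => by rw [hinv j b]
  -- key bound
  have hcardpos : (Fintype.card (Fin R → Fin M → Bool) : ℝ≥0∞) ≠ 0 := by
    simp [Fintype.card_ne_zero]
  have hcardfin : (Fintype.card (Fin R → Fin M → Bool) : ℝ≥0∞) ≠ ⊤ := by
    simp
  have hukey : (Fintype.card (Fin R → Fin M → Bool) : ℝ≥0∞) * u = 1 :=
    ENNReal.mul_inv_cancel hcardpos hcardfin
  have hkey : ((R : ℝ≥0∞) + 1) * μ {ω | countGE S c P (B ω) 0 (eps ω) ≤ mfl}
      ≤ (mfl : ℝ≥0∞) := by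
    calc ((R : ℝ≥0∞) + 1) * μ {ω | countGE S c P (B ω) 0 (eps ω) ≤ mfl}
        = ∑ _j : Fin (R + 1), μ {ω | countGE S c P (B ω) 0 (eps ω) ≤ mfl} := by
          rw [Finset.sum_const, Finset.card_univ, Fintype.card_fin, nsmul_eq_mul]
          push_cast
          ring
      _ = ∑ j : Fin (R + 1), ∑ b : Fin R → Fin M → Bool, u * μ (Ev b j) :=
          Finset.sum_congr rfl fun j _ => by rw [hdecomp, htot j]
      _ = ∑ b : Fin R → Fin M → Bool, ∑ j : Fin (R + 1), u * μ (Ev b j) :=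
          Finset.sum_comm
      _ = ∑ b : Fin R → Fin M → Bool, u * ∑ j : Fin (R + 1), μ (Ev b j) :=
          Finset.sum_congr rfl fun b _ => (Finset.mul_sum _ _ _).symm
      _ ≤ ∑ _b : Fin R → Fin M → Bool, u * (mfl : ℝ≥0∞) :=
          Finset.sum_le_sum fun b _ => mul_le_mul_right (hsumb b) u
      _ = (Fintype.card (Fin R → Fin M → Bool) : ℝ≥0∞) * (u * (mfl : ℝ≥0∞)) := by
          rw [Finset.sum_const, Finset.card_univ, nsmul_eq_mul]
      _ = (mfl : ℝ≥0∞) := by rw [← mul_assoc, hukey, one_mul]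
  -- conclude
  have hmle : (mfl : ℝ≥0∞) ≤ ENNReal.ofReal α * ((R : ℝ≥0∞) + 1) := by
    have h1 : (mfl : ℝ) ≤ α * ((R : ℝ) + 1) := Nat.floor_le (by positivity)
    have h2 : (mfl : ℝ≥0∞) = ENNReal.ofReal (mfl : ℝ) := by
      rw [ENNReal.ofReal_natCast]
    rw [h2]
    calc ENNReal.ofReal (mfl : ℝ) ≤ ENNReal.ofReal (α * ((R : ℝ) + 1)) :=
          ENNReal.ofReal_le_ofReal h1
      _ = ENNReal.ofReal α * ENNReal.ofReal ((R : ℝ) + 1) :=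
          ENNReal.ofReal_mul hα0.le
      _ = ENNReal.ofReal α * ((R : ℝ≥0∞) + 1) := by
          rw [ENNReal.ofReal_add (by positivity) zero_le_one]
          simp [ENNReal.ofReal_natCast]
  have hfinal : μ {ω | countGE S c P (B ω) 0 (eps ω) ≤ mfl} * ((R : ℝ≥0∞) + 1)
      ≤ ENNReal.ofReal α * ((R : ℝ≥0∞) + 1) := by
    rw [mul_comm]
    exact le_trans hkey hmle
  have hR1 : ((R : ℝ≥0∞) + 1) ≠ 0 := by simp
  have hR2 : ((R : ℝ≥0∞) + 1) ≠ ⊤ := by simp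
  exact (ENNReal.mul_le_mul_iff_left hR1 hR2).mp hfinal

end
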